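/- Let S be the two-interval exchange with slope p/N, gcd(p,N)=1, 0<p<N, and let w⁽ᵏ⁾ be the length-N coding of the orbit of k/N. Let b = k̄ − k with 0 ≤ b ≤ min{p, N−p}. Define I₀ = { i : w⁽ᵏ⁾ᵢ = 0 and w^{(k̄)}ᵢ = 1 } and I₁ = { i : w⁽ᵏ⁾ᵢ = 1 and w^{(k̄)}ᵢ = 0 } (indices taken in {0,…,N−1}, successor modulo N). Then #I₀ = #I₁ = b, and for every i ∈ I₀ one has i+1 ∈ I₁ (mod N). -/

import Mathlib

/-- `i`-th letter of the coding word `w⁽ᵏ⁾` is `0` iff `(k - i·p) mod N < p`. -/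
def codeZero (p N : ℕ) (k : ℤ) (i : ℕ) : Prop :=
  (k - (i : ℤ) * p) % (N : ℤ) < (p : ℤ)

instance (p N : ℕ) (k : ℤ) (i : ℕ) : Decidable (codeZero p N k i) := by
  unfold codeZero; infer_instance

theorem stmt16 (p N : ℕ) (hp : 0 < p) (hpN : p < N) (hcop : Nat.Coprime p N)
    (k : ℤ) (b : ℕ) (hb : b ≤ min p (N - p)) (kbar : ℤ) (hkbar : kbar = k + b)
    (I₀ I₁ : Finset ℕ)
    (hI₀ : I₀ = (Finset.range N).filter
      (fun i => codeZero p N k i ∧ ¬ codeZero p N kbar i))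
    (hI₁ : I₁ = (Finset.range N).filter
      (fun i => ¬ codeZero p N k i ∧ codeZero p N kbar i)) :
    I₀.card = b ∧ I₁.card = b ∧ ∀ i ∈ I₀, (i + 1) % N ∈ I₁ := by
  subst hkbar hI₀ hI₁
  set r : ℕ → ℤ := fun i => (k - (i : ℤ) * p) % N with hrdef
  have hN0 : (0:ℤ) < N := by exact_mod_cast hp.trans hpN
  have hb0 : (0:ℤ) ≤ b := Int.natCast_nonneg b
  have hbp : (b:ℤ) ≤ p := by
    have := (le_min_iff.mp hb).1; exact_mod_cast this
  have hbNp : (b:ℤ) + p ≤ N := by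
    have h2 := (le_min_iff.mp hb).2
    have : b + p ≤ N := by omega
    exact_mod_cast this
  have hPN : (p:ℤ) < N := by exact_mod_cast hpN
  have hP0 : (0:ℤ) < p := by exact_mod_cast hp
  have hsmall : ∀ x : ℤ, 0 ≤ x → x < N → x % N = x := fun x h1 h2 =>
    Int.emod_eq_of_lt h1 h2
  have hr0 : ∀ i, 0 ≤ r i := fun i => Int.emod_nonneg _ (by omega)
  have hrN : ∀ i, r i < N := fun i => Int.emod_lt_of_pos _ hN0
  -- codeZero characterizations
  have hcode : ∀ i, codeZero p N k i ↔ r i < p := fun i => Iff.rfl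
  have hbmod : ((b:ℤ)) % N = b := hsmall _ hb0 (by omega)
  have hcodeb : ∀ i, codeZero p N (k + b) i ↔ (r i + b) % N < p := by
    intro i
    unfold codeZero
    have h1 : (k + (b:ℤ) - i * p) % N = (r i + b) % N := by
      rw [show k + (b:ℤ) - (i:ℤ) * p = (k - (i:ℤ)*p) + b by ring]
      rw [Int.add_emod, hbmod, hrdef]
    rw [h1]
  -- membership characterizations
  have hmemI₀ : ∀ i, (i ∈ (Finset.range N).filter
      (fun i => codeZero p N k i ∧ ¬ codeZero p N (k + b) i)) ↔
      i < N ∧ (p:ℤ) - b ≤ r i ∧ r i < p := by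
    intro i
    have h0 := hr0 i
    simp only [Finset.mem_filter, Finset.mem_range, hcode, hcodeb]
    constructor
    · rintro ⟨hiN, h1, h2⟩
      have hm : (r i + b) % N = r i + b := hsmall _ (by omega) (by omega)
      rw [hm] at h2
      exact ⟨hiN, by omega, h1⟩
    · rintro ⟨hiN, h1, h2⟩
      have hm : (r i + b) % N = r i + b := hsmall _ (by omega) (by omega)
      rw [hm]
      exact ⟨hiN, h2, by omega⟩
  have hmemI₁ : ∀ i, (i ∈ (Finset.range N).filter
      (fun i => ¬ codeZero p N k i ∧ codeZero p N (k + b) i)) ↔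
      i < N ∧ (N:ℤ) - b ≤ r i := by
    intro i
    have h0 := hr0 i
    have hri := hrN i
    simp only [Finset.mem_filter, Finset.mem_range, hcode, hcodeb]
    constructor
    · rintro ⟨hiN, h1, h2⟩
      refine ⟨hiN, ?_⟩
      by_contra hlt
      push_neg at hlt
      have hm : (r i + b) % N = r i + b := hsmall _ (by omega) (by omega)
      rw [hm] at h2; omega
    · rintro ⟨hiN, h1⟩
      have hm : (r i + b) % N = r i + b - N := by
        conv_lhs => rw [show r i + (b:ℤ) = (r i + b - N) + N * 1 by ring,
          Int.add_mul_emod_self_left]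
        exact hsmall (r i + b - N) (by omega) (by omega)
      rw [hm]
      exact ⟨by omega, by omega⟩
  -- injectivity of r on range N
  have hco : IsCoprime (N:ℤ) (p:ℤ) := by
    rw [Nat.isCoprime_iff_coprime]; exact hcop.symm
  have hinj : Set.InjOn r (Finset.range N) := by
    intro i hi j hj hij
    simp only [Finset.coe_range, Set.mem_Iio] at hi hj
    have hij' : (k - (i:ℤ)*p) % N = (k - (j:ℤ)*p) % N := hij
    have hdvd : (N:ℤ) ∣ (k - (i:ℤ)*p) - (k - (j:ℤ)*p) :=
      Int.dvd_of_emod_eq_zero (Int.emod_eq_emod_iff_emod_sub_eq_zero.mp hij')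
    have hdvd2 : (N:ℤ) ∣ ((j:ℤ) - i) * p := by
      have he : (k - (i:ℤ)*p) - (k - (j:ℤ)*p) = ((j:ℤ) - i) * p := by ring
      rwa [he] at hdvd
    have hdvd3 : (N:ℤ) ∣ ((j:ℤ) - i) := hco.dvd_of_dvd_mul_right hdvd2
    have habs : |(j:ℤ) - i| < N := by
      rw [abs_lt]; omega
    have hz : (j:ℤ) - i = 0 := by
      by_contra hne
      have h1 : 0 < |(j:ℤ) - i| := abs_pos.mpr hne
      have h2 : (N:ℤ) ≤ |(j:ℤ) - i| := Int.le_of_dvd h1 ((dvd_abs _ _).mpr hdvd3)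
      omega
    omega
  -- range of r is all of Ico 0 N
  have hRange : Finset.image r (Finset.range N) = Finset.Ico (0:ℤ) N := by
    apply Finset.eq_of_subset_of_card_le
    · intro t ht
      rw [Finset.mem_image] at ht
      obtain ⟨i, _, rfl⟩ := ht
      exact Finset.mem_Ico.mpr ⟨hr0 i, hrN i⟩
    · rw [Finset.card_image_of_injOn hinj, Finset.card_range, Int.card_Ico]
      simp
  -- generic cardinality lemma
  have hcard : ∀ lo hi : ℤ, 0 ≤ lo → hi ≤ N →
      ((Finset.range N).filter (fun i => lo ≤ r i ∧ r i < hi)).card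
        = (Finset.Ico lo hi).card := by
    intro lo hi hlo hhi
    apply Finset.card_nbij r
    · intro a ha
      simp only [Finset.mem_filter, Finset.coe_filter, Set.mem_setOf_eq] at ha ⊢
      exact Finset.mem_Ico.mpr ha.2
    · refine hinj.mono ?_
      intro x hx
      simp only [Finset.coe_filter, Set.mem_setOf_eq] at hx
      exact Finset.mem_coe.mpr hx.1
    · intro t ht
      simp only [Finset.coe_Ico, Set.mem_Ico] at ht
      have hmem : t ∈ Finset.Ico (0:ℤ) N := Finset.mem_Ico.mpr ⟨by omega, by omega⟩
      rw [← hRange, Finset.mem_image] at hmem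
      obtain ⟨i, hiN, rfl⟩ := hmem
      refine ⟨i, ?_, rfl⟩
      simp only [Finset.coe_filter, Set.mem_setOf_eq]
      exact ⟨hiN, ht.1, ht.2⟩
  refine ⟨?_, ?_, ?_⟩
  · -- card I₀
    have h1 : (Finset.range N).filter
        (fun i => codeZero p N k i ∧ ¬ codeZero p N (k + b) i)
        = (Finset.range N).filter (fun i => (p:ℤ) - b ≤ r i ∧ r i < p) := by
      ext i
      rw [hmemI₀ i]
      simp only [Finset.mem_filter, Finset.mem_range]
    rw [h1, hcard _ _ (by omega) (by omega), Int.card_Ico]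
    omega
  · -- card I₁
    have h1 : (Finset.range N).filter
        (fun i => ¬ codeZero p N k i ∧ codeZero p N (k + b) i)
        = (Finset.range N).filter (fun i => (N:ℤ) - b ≤ r i ∧ r i < N) := by
      ext i
      rw [hmemI₁ i]
      simp only [Finset.mem_filter, Finset.mem_range]
      have := hrN i
      tauto
    rw [h1, hcard _ _ (by omega) (by omega), Int.card_Ico]
    omega
  · -- adjacency
    intro i hi
    rw [hmemI₀ i] at hi
    obtain ⟨hiN, hlo, hhi⟩ := hi
    rw [hmemI₁]
    have hN' : 0 < N := by omega
    refine ⟨Nat.mod_lt _ hN', ?_⟩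
    have h0 := hr0 i
    -- compute r ((i+1) % N)
    have hstep : r ((i + 1) % N) = r i - p + N := by
      have e1 : r ((i + 1) % N) = (k - ((i:ℤ) + 1) * p) % N := by
        show (k - (((i+1) % N : ℕ):ℤ) * p) % N = _
        rw [Int.sub_emod, Int.mul_emod]
        conv_rhs => rw [Int.sub_emod, Int.mul_emod]
        congr 2
        push_cast
        rw [Int.emod_emod_of_dvd _ dvd_rfl]
      have e2 : (k - ((i:ℤ) + 1) * p) % N = (r i - p) % N := by
        have hr' : r i = (k - (i:ℤ)*p) % N := rfl
        rw [show k - ((i:ℤ) + 1) * p = (k - (i:ℤ)*p) - p by ring,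
          Int.sub_emod (k - (i:ℤ)*p) p, hsmall _ hP0.le hPN, ← hr',
          Int.sub_emod]
      have e3 : (r i - p) % N = r i - p + N := by
        conv_lhs => rw [show r i - (p:ℤ) = (r i - p + N) + N * (-1) by ring,
          Int.add_mul_emod_self_left]
        exact hsmall (r i - p + N) (by omega) (by omega)
      rw [e1, e2, e3]
    rw [hstep]
    omega
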